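/- Let V = V₁ ⊕ V₂ and let C', C, C'' be subspaces with C' ⊆ C ⊆ C'', C' = (C'∩V₁)⊕(C'∩V₂), C'' = (C''∩V₁)⊕(C''∩V₂), and C''∩V₁ = C'∩V₁. Then C = (C∩V₁) ⊕ (C∩V₂). -/
import Mathlib


theorem stmt_11 {K V : Type*} [Field K] [AddCommGroup V] [Module K V]
    (V₁ V₂ : Submodule K V) (hV : IsCompl V₁ V₂)
    (C' C C'' : Submodule K V) (h1 : C' ≤ C) (h2 : C ≤ C'')
    (hC' : C' = (C' ⊓ V₁) ⊔ (C' ⊓ V₂))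
    (hC'' : C'' = (C'' ⊓ V₁) ⊔ (C'' ⊓ V₂))
    (heq : C'' ⊓ V₁ = C' ⊓ V₁) :
    C = (C ⊓ V₁) ⊔ (C ⊓ V₂) := by
  apply le_antisymm
  · intro c hc
    have hc'' : c ∈ (C'' ⊓ V₁) ⊔ (C'' ⊓ V₂) := hC'' ▸ h2 hc
    obtain ⟨a, ha, b, hb, hab⟩ := Submodule.mem_sup.mp hc''
    rw [heq] at ha
    have haC : a ∈ C := h1 ha.1
    have hbC : b ∈ C := by
      have : b = c - a := by rw [← hab]; abel
      rw [this]; exact C.sub_mem hc haC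
    exact hab ▸ Submodule.add_mem_sup ⟨haC, ha.2⟩ ⟨hbC, hb.2⟩
  · exact sup_le inf_le_left inf_le_left
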